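/- Let G be a cograph that contains no independent set of size k (where k ≥ 1). Then the vertex set of G can be partitioned into at most k − 1 cliques. -/

import Mathlib

/-- `G` restricted to the set `S` admits a cotree of depth at most `d`: either `S` is a
single vertex, or `S` is partitioned into parts each admitting a cotree of depth at
most `d - 1`, with all pairs between distinct parts adjacent (join node) or all pairs
non-adjacent (union node). -/
def CotreeDepth {V : Type*} (G : SimpleGraph V) : ℕ → Set V → Prop
  | 0, _ => False
  | d + 1, S =>
      (∃ v, S = {v}) ∨
      ∃ P : Set (Set V),
        (∀ A ∈ P, A.Nonempty ∧ A ⊆ S ∧ CotreeDepth G d A) ∧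
        ⋃₀ P = S ∧
        (∀ A ∈ P, ∀ B ∈ P, A ≠ B → Disjoint A B) ∧
        ((∀ A ∈ P, ∀ B ∈ P, A ≠ B → ∀ x ∈ A, ∀ y ∈ B, G.Adj x y) ∨
          (∀ A ∈ P, ∀ B ∈ P, A ≠ B → ∀ x ∈ A, ∀ y ∈ B, ¬ G.Adj x y))

/-- `G` is a cograph: it admits a cotree of some depth. -/
def IsCograph {V : Type*} (G : SimpleGraph V) : Prop :=
  ∃ d : ℕ, CotreeDepth G d Set.univ

/-- `s` is an independent set of `G`. -/
def IsIndepSet {V : Type*} (G : SimpleGraph V) (s : Set V) : Prop :=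
  ∀ x ∈ s, ∀ y ∈ s, x ≠ y → ¬ G.Adj x y

open Classical in
lemma cotree_key {V : Type*} [Fintype V] (G : SimpleGraph V) :
    ∀ d : ℕ, ∀ N : ℕ, ∀ S : Set V, S.ncard ≤ N → CotreeDepth G d S →
    ∃ (n : ℕ) (c : V → ℕ) (t : Finset V),
      (∀ v ∈ S, c v < n) ∧
      (∀ i : ℕ, G.IsClique {v | v ∈ S ∧ c v = i}) ∧
      ↑t ⊆ S ∧ t.card = n ∧ IsIndepSet G ↑t := by
  intro d
  induction d with
  | zero => intro N S _ h; exact h.elim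
  | succ d ihd =>
    intro N
    induction N with
    | zero =>
      intro S hS _
      have hSe : S = ∅ := by
        rw [← Set.ncard_eq_zero (Set.toFinite S)]; omega
      subst hSe
      refine ⟨0, fun _ => 0, ∅, by simp, ?_, by simp, by simp, ?_⟩
      · intro i x hx; exact absurd hx.1 (Set.notMem_empty x)
      · intro x hx; simp at hx
    | succ N ihN =>
      intro S hS h
      rcases h with ⟨v, rfl⟩ | ⟨P, hparts, hcover, hdisj, halt⟩
      · refine ⟨1, fun _ => 0, {v}, by simp, ?_, by simp, by simp, ?_⟩
        · intro i x hx y hy hxy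
          exact absurd (hx.1.trans hy.1.symm) hxy
        · intro x hx y hy hxy
          simp only [Finset.coe_singleton, Set.mem_singleton_iff] at hx hy
          exact absurd (hx.trans hy.symm) hxy
      · by_cases hSe : S = ∅
        · subst hSe
          refine ⟨0, fun _ => 0, ∅, by simp, ?_, by simp, by simp, ?_⟩
          · intro i x hx; exact absurd hx.1 (Set.notMem_empty x)
          · intro x hx; simp at hx
        · -- S nonempty, so P nonempty
          obtain ⟨w, hw⟩ := Set.nonempty_iff_ne_empty.2 hSe
          rw [← hcover] at hw
          obtain ⟨A, hA, hwA⟩ := hw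
          by_cases hPB : ∃ B ∈ P, B ≠ A
          · obtain ⟨B, hB, hBA⟩ := hPB
            set R : Set V := ⋃₀ (P \ {A}) with hRdef
            have hAS : A ⊆ S := (hparts A hA).2.1
            have hAne : A.Nonempty := (hparts A hA).1
            have hRS : R ⊆ S := by
              intro x hx
              obtain ⟨C, hC, hxC⟩ := hx
              exact (hparts C hC.1).2.1 hxC
            have hAR : Disjoint A R := by
              rw [hRdef, Set.disjoint_sUnion_right]
              intro C hC
              exact hdisj A hA C hC.1 (fun e => hC.2 e.symm)
            have hSAR : S = A ∪ R := by
              ext x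
              constructor
              · intro hx
                rw [← hcover] at hx
                obtain ⟨C, hC, hxC⟩ := hx
                by_cases hCA : C = A
                · exact Or.inl (hCA ▸ hxC)
                · exact Or.inr ⟨C, ⟨hC, hCA⟩, hxC⟩
              · rintro (hx | hx)
                · exact hAS hx
                · exact hRS hx
            have hRne : R.Nonempty := by
              obtain ⟨b, hb⟩ := (hparts B hB).1
              exact ⟨b, B, ⟨hB, hBA⟩, hb⟩
            have hcR : CotreeDepth G (d + 1) R := by
              refine Or.inr ⟨P \ {A}, ?_, rfl, ?_, ?_⟩
              · intro C hC
                exact ⟨(hparts C hC.1).1, Set.subset_sUnion_of_mem hC,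
                  (hparts C hC.1).2.2⟩
              · intro C hC D hD hCD
                exact hdisj C hC.1 D hD.1 hCD
              · rcases halt with h1 | h1
                · exact Or.inl fun C hC D hD hCD => h1 C hC.1 D hD.1 hCD
                · exact Or.inr fun C hC D hD hCD => h1 C hC.1 D hD.1 hCD
            have hcard : A.ncard + R.ncard = S.ncard := by
              rw [hSAR, Set.ncard_union_eq hAR (Set.toFinite A) (Set.toFinite R)]
            have hApos : 0 < A.ncard := (Set.ncard_pos (Set.toFinite A)).2 hAne
            have hRpos : 0 < R.ncard := (Set.ncard_pos (Set.toFinite R)).2 hRne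
            have hRle : R.ncard ≤ N := by omega
            obtain ⟨nA, cA, tA, hbA, hclA, htA, hctA, hiA⟩ :=
              ihd A.ncard A le_rfl (hparts A hA).2.2
            obtain ⟨nR, cR, tR, hbR, hclR, htR, hctR, hiR⟩ := ihN R hRle hcR
            rcases halt with hjoin | hunion
            · -- join node: all pairs between A and R adjacent
              have hcross : ∀ x ∈ A, ∀ y ∈ R, G.Adj x y := by
                intro x hx y hy
                obtain ⟨C, hC, hyC⟩ := hy
                exact hjoin A hA C hC.1 (fun e => hC.2 e.symm) x hx y hyC
              refine ⟨max nA nR, fun v => if v ∈ A then cA v else cR v,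
                if nA ≤ nR then tR else tA, ?_, ?_, ?_, ?_, ?_⟩
              · intro v hv
                by_cases hvA : v ∈ A
                · simp only [if_pos hvA]
                  exact lt_of_lt_of_le (hbA v hvA) (le_max_left _ _)
                · have hvR : v ∈ R := (hSAR ▸ hv).resolve_left hvA
                  simp only [if_neg hvA]
                  exact lt_of_lt_of_le (hbR v hvR) (le_max_right _ _)
              · intro i x hx y hy hxy
                obtain ⟨hxS, hxc⟩ := hx
                obtain ⟨hyS, hyc⟩ := hy
                by_cases hxA : x ∈ A <;> by_cases hyA : y ∈ A
                · simp only [if_pos hxA] at hxc; simp only [if_pos hyA] at hyc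
                  exact hclA i ⟨hxA, hxc⟩ ⟨hyA, hyc⟩ hxy
                · exact hcross x hxA y ((hSAR ▸ hyS).resolve_left hyA)
                · exact (hcross y hyA x ((hSAR ▸ hxS).resolve_left hxA)).symm
                · simp only [if_neg hxA] at hxc; simp only [if_neg hyA] at hyc
                  exact hclR i ⟨(hSAR ▸ hxS).resolve_left hxA, hxc⟩
                    ⟨(hSAR ▸ hyS).resolve_left hyA, hyc⟩ hxy
              · split
                · exact htR.trans hRS
                · exact htA.trans hAS
              · split <;> rename_i hle
                · rw [hctR, max_eq_right hle]
                · rw [hctA, max_eq_left (le_of_not_ge hle)]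
              · split
                · exact hiR
                · exact hiA
            · -- union node: all pairs between A and R non-adjacent
              have hcross : ∀ x ∈ A, ∀ y ∈ R, ¬ G.Adj x y := by
                intro x hx y hy
                obtain ⟨C, hC, hyC⟩ := hy
                exact hunion A hA C hC.1 (fun e => hC.2 e.symm) x hx y hyC
              have htdisj : Disjoint tA tR := by
                rw [Finset.disjoint_left]
                intro a haA haR
                exact Set.disjoint_left.1 hAR (htA haA) (htR haR)
              refine ⟨nA + nR, fun v => if v ∈ A then cA v else nA + cR v,
                tA ∪ tR, ?_, ?_, ?_, ?_, ?_⟩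
              · intro v hv
                by_cases hvA : v ∈ A
                · simp only [if_pos hvA]
                  have := hbA v hvA; omega
                · have hvR : v ∈ R := (hSAR ▸ hv).resolve_left hvA
                  simp only [if_neg hvA]
                  have := hbR v hvR; omega
              · intro i x hx y hy hxy
                obtain ⟨hxS, hxc⟩ := hx
                obtain ⟨hyS, hyc⟩ := hy
                by_cases hxA : x ∈ A <;> by_cases hyA : y ∈ A
                · simp only [if_pos hxA] at hxc; simp only [if_pos hyA] at hyc
                  exact hclA i ⟨hxA, hxc⟩ ⟨hyA, hyc⟩ hxy
                · exfalso
                  simp only [if_pos hxA] at hxc; simp only [if_neg hyA] at hyc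
                  have := hbA x hxA; omega
                · exfalso
                  simp only [if_neg hxA] at hxc; simp only [if_pos hyA] at hyc
                  have := hbA y hyA; omega
                · simp only [if_neg hxA] at hxc; simp only [if_neg hyA] at hyc
                  have hxR : x ∈ R := (hSAR ▸ hxS).resolve_left hxA
                  have hyR : y ∈ R := (hSAR ▸ hyS).resolve_left hyA
                  exact hclR (i - nA) ⟨hxR, by omega⟩ ⟨hyR, by omega⟩ hxy
              · intro x hx
                rcases Finset.mem_union.1 hx with hx | hx
                · exact hAS (htA hx)
                · exact hRS (htR hx)
              · rw [Finset.card_union_of_disjoint htdisj, hctA, hctR]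
              · intro x hx y hy hxy hadj
                rw [Finset.coe_union] at hx hy
                rcases hx with hx | hx <;> rcases hy with hy | hy
                · exact hiA x hx y hy hxy hadj
                · exact hcross x (htA hx) y (htR hy) hadj
                · exact hcross y (htA hy) x (htR hx) hadj.symm
                · exact hiR x hx y hy hxy hadj
          · -- P = {A}
            push_neg at hPB
            have hSA : S = A := by
              rw [← hcover]
              apply Set.eq_of_subset_of_subset
              · intro x hx
                obtain ⟨C, hC, hxC⟩ := hx
                rwa [hPB C hC] at hxC
              · exact Set.subset_sUnion_of_mem hA
            rw [hSA]
            exact ihd A.ncard A le_rfl (hparts A hA).2.2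

/-- A cograph with no independent set of size `k` (where `k ≥ 1`) has a partition of
its vertex set into at most `k - 1` cliques. -/
theorem cograph_partition_into_cliques {V : Type*} [Fintype V] (G : SimpleGraph V)
    (k : ℕ) (hk : 1 ≤ k) (hG : IsCograph G)
    (hind : ¬ ∃ s : Finset V, s.card = k ∧ IsIndepSet G ↑s) :
    ∃ c : V → Fin (k - 1), ∀ i : Fin (k - 1), G.IsClique {v | c v = i} := by
  obtain ⟨d, hd⟩ := hG
  obtain ⟨n, c, t, hb, hcl, hts, htc, hti⟩ :=
    cotree_key G d (Set.univ : Set V).ncard Set.univ le_rfl hd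
  have hnk : n < k := by
    by_contra hle
    push_neg at hle
    obtain ⟨s, hs, hsc⟩ := Finset.exists_subset_card_eq (s := t) (htc ▸ hle)
    exact hind ⟨s, hsc, fun x hx y hy hxy => hti x (hs hx) y (hs hy) hxy⟩
  cases isEmpty_or_nonempty V with
  | inl hV =>
    exact ⟨fun v => isEmptyElim v, fun i x hx => isEmptyElim x⟩
  | inr hV =>
    have hn1 : 1 ≤ n := by
      obtain ⟨v⟩ := hV
      have := hb v (Set.mem_univ v)
      omega
    refine ⟨fun v => ⟨c v, by have := hb v (Set.mem_univ v); omega⟩, ?_⟩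
    intro i x hx y hy hxy
    have hx' : c x = i.val := congrArg Fin.val hx
    have hy' : c y = i.val := congrArg Fin.val hy
    exact hcl i.val ⟨Set.mem_univ x, hx'⟩ ⟨Set.mem_univ y, hy'⟩ hxy
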